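/- arXiv:math/0612165 — 3 statements merged into one kernel-verified Lean document; each statement's English description precedes it below -/
import Mathlib

section
/- Every morphism in the category ΔΣ of noncommutative sets factors uniquely as a bijection (permutation) followed by an order-preserving map, once linear orderings of the source and target are fixed. -/
/-- A copy of a type, used to carry a second linear order. -/
private def NCCopy (S : Type*) := S

private theorem exists_unique_sorting_perm {S : Type*} [Fintype S] [LinearOrder S]
    (q : S → S → Prop) (hsto : IsStrictTotalOrder S q) :
    ∃! σ : Equiv.Perm S, ∀ a b, q a b ↔ σ a < σ b := by
  classical
  letI instF : Fintype (NCCopy S) := ‹Fintype S›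
  haveI hsto' : IsStrictTotalOrder (NCCopy S) (fun a b : NCCopy S => q a b) := hsto
  letI instL : LinearOrder (NCCopy S) := linearOrderOfSTO (fun a b : NCCopy S => q a b)
  haveI : Finite (NCCopy S) := Finite.of_fintype _
  haveI : WellFoundedLT (NCCopy S) := Finite.to_wellFoundedLT
  have hcard : Fintype.card (NCCopy S) = Fintype.card S := rfl
  let e₁ := Fintype.orderIsoFinOfCardEq (NCCopy S) hcard
  let e₂ := Fintype.orderIsoFinOfCardEq S rfl
  let e : (NCCopy S) ≃o S := e₁.symm.trans e₂
  let σ₀ : Equiv.Perm S := e.toEquiv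
  have h₀ : ∀ a b, q a b ↔ σ₀ a < σ₀ b := by
    intro a b
    exact (e.lt_iff_lt).symm
  refine ⟨σ₀, h₀, ?_⟩
  intro σ' h'
  have ho : StrictMono (fun a : NCCopy S => σ' a) := fun a b hab => (h' a b).1 hab
  have ho₀ : StrictMono (fun a : NCCopy S => σ₀ a) := fun a b hab => (h₀ a b).1 hab
  have hsub := Subsingleton.elim
    (StrictMono.orderIsoOfSurjective _ ho σ'.surjective)
    (StrictMono.orderIsoOfSurjective _ ho₀ σ₀.surjective)
  ext x
  exact congrFun (congrArg (fun o : (NCCopy S ≃o S) => (o : NCCopy S → S)) hsub) x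

theorem ncset_unique_factorization {S T : Type*} [Fintype S] [LinearOrder S] [LinearOrder T]
    (f : S → T) (r : S → S → Prop)
    (hrefl : ∀ s, r s s)
    (htotal : ∀ s₁ s₂, f s₁ = f s₂ → r s₁ s₂ ∨ r s₂ s₁)
    (hantisymm : ∀ s₁ s₂, f s₁ = f s₂ → r s₁ s₂ → r s₂ s₁ → s₁ = s₂)
    (htrans : ∀ s₁ s₂ s₃, f s₁ = f s₂ → f s₂ = f s₃ → r s₁ s₂ → r s₂ s₃ → r s₁ s₃) :
    ∃! σ : Equiv.Perm S,
      Monotone (f ∘ σ.symm) ∧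
      ∀ s₁ s₂, f s₁ = f s₂ → (r s₁ s₂ ↔ σ s₁ ≤ σ s₂) := by
  classical
  set q : S → S → Prop := fun a b => f a < f b ∨ (f a = f b ∧ r a b ∧ a ≠ b) with hq
  have hsto : IsStrictTotalOrder S q := by
    haveI ht : IsTrichotomous S q := by
      constructor
      intro a b
      suffices H : q a b ∨ a = b ∨ q b a by
        intro h1 h2
        exact (H.resolve_left h1).resolve_right h2
      rcases lt_trichotomy (f a) (f b) with h | h | h
      · exact Or.inl (Or.inl h)
      · by_cases hab : a = b
        · exact Or.inr (Or.inl hab)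
        · rcases htotal a b h with hr | hr
          · exact Or.inl (Or.inr ⟨h, hr, hab⟩)
          · exact Or.inr (Or.inr (Or.inr ⟨h.symm, hr, Ne.symm hab⟩))
      · exact Or.inr (Or.inr (Or.inl h))
    haveI hi : IsIrrefl S q := by
      constructor
      intro a h
      rcases h with h | h
      · exact lt_irrefl _ h
      · exact h.2.2 rfl
    haveI htr : IsTrans S q := by
      constructor
      intro a b c hab hbc
      rcases hab with hab | hab <;> rcases hbc with hbc | hbc
      · exact Or.inl (hab.trans hbc)
      · exact Or.inl (hbc.1 ▸ hab)
      · exact Or.inl (hab.1 ▸ hbc)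
      · refine Or.inr ⟨hab.1.trans hbc.1, htrans a b c hab.1 hbc.1 hab.2.1 hbc.2.1, ?_⟩
        rintro rfl
        exact hab.2.2 (hantisymm a b hab.1 hab.2.1 hbc.2.1)
    haveI : IsStrictOrder S q := ⟨⟩
    exact ⟨⟩
  obtain ⟨σ, hσ, huniq⟩ := exists_unique_sorting_perm q hsto
  have hgood : ∀ σ' : Equiv.Perm S,
      (Monotone (f ∘ σ'.symm) ∧ ∀ s₁ s₂, f s₁ = f s₂ → (r s₁ s₂ ↔ σ' s₁ ≤ σ' s₂)) ↔
      (∀ a b, q a b ↔ σ' a < σ' b) := by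
    intro σ'
    constructor
    · rintro ⟨hm, hr'⟩ a b
      constructor
      · intro hab
        rcases hab with hab | hab
        · -- f a < f b
          by_contra hle
          push_neg at hle
          have := hm hle
          simp only [Function.comp_apply, Equiv.symm_apply_apply] at this
          exact absurd (lt_of_lt_of_le hab this) (lt_irrefl _)
        · have hle := (hr' a b hab.1).1 hab.2.1
          exact lt_of_le_of_ne hle (fun h => hab.2.2 (σ'.injective h))
      · intro hlt
        rcases trichotomous_of q a b with h | h | h
        · exact h
        · subst h; exact absurd hlt (lt_irrefl _)
        · -- q b a contradicts σ' a < σ' b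
          exfalso
          rcases h with h | h
          · by_contra _
            have : ¬ σ' b ≤ σ' a := not_le.mpr hlt
            apply this
            by_contra hle2
            push_neg at hle2
            have := hm hle2.le
            simp only [Function.comp_apply, Equiv.symm_apply_apply] at this
            exact absurd (lt_of_lt_of_le h this) (lt_irrefl _)
          · have hle := (hr' b a h.1).1 h.2.1
            exact absurd hlt (not_lt.mpr hle)
    · intro h
      constructor
      · intro x y hxy
        rcases eq_or_lt_of_le hxy with hxy | hxy
        · simp [hxy]
        · have : σ' (σ'.symm x) < σ' (σ'.symm y) := by
            simpa using hxy
          have hq' := (h _ _).2 this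
          rcases hq' with hq' | hq'
          · exact le_of_lt hq'
          · exact le_of_eq hq'.1
      · intro s₁ s₂ hf
        constructor
        · intro hr'
          by_cases hs : s₁ = s₂
          · exact le_of_eq (congrArg σ' hs)
          · exact le_of_lt ((h s₁ s₂).1 (Or.inr ⟨hf, hr', hs⟩))
        · intro hle
          rcases eq_or_lt_of_le hle with hle | hlt
          · have : s₁ = s₂ := σ'.injective hle
            subst this; exact hrefl s₁
          · rcases (h s₁ s₂).2 hlt with h' | h'
            · exact absurd (hf ▸ h') (lt_irrefl _)
            · exact h'.2.1
  exact ⟨σ, (hgood σ).2 hσ, fun σ' h' => huniq σ' ((hgood σ').1 h')⟩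
end

section
/- Let P be a (non-symmetric) operad in a closed symmetric monoidal category C and let A be a subcategory of ΔΣ. Then the assignment with the same objects as A and Hom_{A_P}(S,T) = ∐_{f ∈ Hom_A(S,T)} ⊗_{t∈T} P(f^{-1}(t)), with composition induced by the operad structure maps of P, satisfies associativity and unitality, hence defines a C-enriched category. -/
/-!
STATEMENT 8: Let `P` be a (non-symmetric) operad in a closed symmetric monoidal category `C`
(here `C = Type u`, with `⊗ = ×`, which is closed symmetric monoidal, coproducts given by sigma
types, and `⊗` distributing over coproducts) and let `A` be a subcategory of `ΔΣ`.  Then the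
assignment with the same objects as `A` and
`Hom_{A_P}(S, T) = ∐_{f ∈ Hom_A(S,T)} ⊗_{t ∈ T} P(f⁻¹(t))`,
with the composition induced by the operad structure maps of `P`, satisfies associativity and
unitality, hence defines a `C`-enriched category.

Morphisms of `ΔΣ` are encoded by their fibers with linear orderings (`NCHom`); the operad `P`
consists of a sequence `ob`, a unit, and substitution maps `γ`, and the operad axioms (left and
right unitality and associativity of `γ`) are the hypotheses `P.LeftUnit`, `P.RightUnit`,
`P.Assoc`.
-/
/-- A morphism in the (skeletal) category `ΔΣ` of noncommutative sets, from the `m`-element set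
`Fin m` to the `n`-element set `Fin n`: a map of sets together with a linear ordering of each
fiber, recorded as the list `fiber j` of the elements of the fiber over `j`, in their linear
order.  The conditions say that the fibers partition `Fin m`. -/
structure NCHom (m n : ℕ) : Type where
  fiber : Fin n → List (Fin m)
  nodup : ∀ j, (fiber j).Nodup
  mem_unique : ∀ i : Fin m, ∃! j : Fin n, i ∈ fiber j

namespace NCHom

/-- The identity morphism of `ΔΣ`. -/
def id (m : ℕ) : NCHom m m where
  fiber j := [j]
  nodup j := List.nodup_singleton j
  mem_unique i :=
    ⟨i, List.mem_singleton.mpr rfl, fun j hj => (List.mem_singleton.mp hj).symm⟩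

/-- Composition in `ΔΣ`: the fiber of `g ∘ f` over `k` is the union of the fibers of `f` over
the elements of the fiber of `g` over `k`, ordered lexicographically. -/
def comp {m n p : ℕ} (g : NCHom n p) (f : NCHom m n) : NCHom m p where
  fiber k := (g.fiber k).flatMap f.fiber
  nodup k := by
    rw [List.nodup_flatMap]
    refine ⟨fun j _ => f.nodup j, ?_⟩
    refine List.Pairwise.imp_of_mem ?_ ((g.nodup k).imp (fun hne => hne) )
    intro j₁ j₂ _ _ hne
    rw [Function.onFun, List.disjoint_left]
    intro i h1 h2
    obtain ⟨j, _, hj⟩ := f.mem_unique i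
    exact hne ((hj j₁ h1).trans (hj j₂ h2).symm)
  mem_unique i := by
    obtain ⟨j, hij, hj⟩ := f.mem_unique i
    obtain ⟨k, hjk, hk⟩ := g.mem_unique j
    refine ⟨k, List.mem_flatMap.mpr ⟨j, hjk, hij⟩, ?_⟩
    intro k' hk'
    obtain ⟨j', hj'k', hij'⟩ := List.mem_flatMap.mp hk'
    exact hk k' (by rwa [hj j' hij'] at hj'k')

end NCHom
universe u

/-- The underlying data of a (non-symmetric) operad in `Type u`: a sequence of objects `ob n`
(the `n`-ary operations), a unit, and structure maps `γ` substituting a family of operations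
(of arities given by the list `ns`) into an operation of arity `ns.length`. -/
structure Operad : Type (u + 1) where
  ob : ℕ → Type u
  unit : ob 1
  γ : ∀ (ns : List ℕ), ob ns.length → ((i : Fin ns.length) → ob ns[i]) → ob ns.sum

namespace Operad

variable (P : Operad.{u})

/-- Transport an operation along an equality of arities. -/
def castOb {a b : ℕ} (h : a = b) : P.ob a → P.ob b := fun x => h ▸ x

theorem sum_take_add_lt {ns : List ℕ} (i : Fin ns.length) {j : ℕ} (hj : j < ns[(i : ℕ)]) :
    (ns.take i).sum + j < ns.sum := by
  conv_rhs => rw [← List.sum_take_add_sum_drop ns i]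
  have hd : ns[(i : ℕ)] :: ns.drop (i + 1) = ns.drop i := List.getElem_cons_drop i.isLt
  have : ns[(i : ℕ)] ≤ (ns.drop i).sum := by
    rw [← hd, List.sum_cons]; omega
  omega

/-- The position in the concatenation `nss.flatten` of the `j`-th element of the `i`-th list. -/
def flatIdx (nss : List (List ℕ)) (i : Fin nss.length) (j : Fin nss[i].length) :
    Fin nss.flatten.length :=
  ⟨((nss.take i).map List.length).sum + j, by
    rw [List.length_flatten, List.map_take]
    exact sum_take_add_lt (ns := nss.map List.length) (Fin.cast (by simp) i)
      (by simpa using j.isLt)⟩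

/-- Left unit axiom: substituting into the identity operation gives the operation back. -/
def LeftUnit : Prop :=
  ∀ (n : ℕ) (b : (i : Fin ([n] : List ℕ).length) → P.ob ([n] : List ℕ)[i]),
    P.γ [n] P.unit b = P.castOb (by simp) (b ⟨0, by simp⟩)

/-- Right unit axiom: substituting identities into an operation gives it back. -/
def RightUnit : Prop :=
  ∀ (n : ℕ) (a : P.ob n),
    P.γ (List.replicate n 1)
        (P.castOb (by simp) a)
        (fun i => P.castOb (by simp) P.unit)
      = P.castOb (by simp) a

/-- Associativity axiom for `γ`, in two-level form: substituting the `c`-operations into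
`γ nss.map length a b` agrees with substituting into `a` the results of substituting the
`c`-operations into the `b`-operations.  Here `c` is indexed by positions of the flattened list
and `d` is the same family indexed in two-level form. -/
def Assoc : Prop :=
  ∀ (nss : List (List ℕ)) (a : P.ob nss.length)
    (b : (i : Fin nss.length) → P.ob nss[i].length)
    (c : (t : Fin nss.flatten.length) → P.ob nss.flatten[t])
    (d : (i : Fin nss.length) → (j : Fin nss[i].length) → P.ob nss[i][j]),
    (∀ (i : Fin nss.length) (j : Fin nss[i].length), HEq (c (flatIdx nss i j)) (d i j)) →
    P.γ nss.flatten
        (P.castOb (by simp)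
          (P.γ (nss.map List.length)
            (P.castOb (by simp) a)
            (fun i => P.castOb (by simp) (b (Fin.cast (by simp) i)))))
        c
      = P.castOb (by simp)
        (P.γ (nss.map List.sum)
          (P.castOb (by simp) a)
          (fun i => P.castOb (List.getElem_map _).symm
            (P.γ nss[(Fin.cast (List.length_map _) i : Fin nss.length)]
              (b (Fin.cast (List.length_map _) i))
              (d (Fin.cast (List.length_map _) i)))))


section Helpers
variable (P : Operad.{u})

theorem castOb_heq {a b : ℕ} (h : a = b) (x : P.ob a) : HEq (P.castOb h x) x := by
  subst h; rfl

theorem heq_castOb_left {a b : ℕ} (h : a = b) (x : P.ob a) {Z : Type u} (z : Z) :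
    HEq (P.castOb h x) z ↔ HEq x z := by subst h; exact Iff.rfl

theorem heq_castOb_right {a b : ℕ} (h : a = b) (x : P.ob a) {Z : Type u} (z : Z) :
    HEq z (P.castOb h x) ↔ HEq z x := by subst h; exact Iff.rfl

theorem γ_congr {ns ns' : List ℕ} (h : ns = ns')
    {a : P.ob ns.length} {a' : P.ob ns'.length} (ha : HEq a a')
    {b : (i : Fin ns.length) → P.ob ns[i]} {b' : (i : Fin ns'.length) → P.ob ns'[i]}
    (hb : ∀ (i : Fin ns.length) (i' : Fin ns'.length), (i : ℕ) = (i' : ℕ) →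
      HEq (b i) (b' i')) :
    HEq (P.γ ns a b) (P.γ ns' a' b') := by
  subst h
  rw [eq_of_heq ha]
  have : b = b' := funext fun i => eq_of_heq (hb i i rfl)
  rw [this]

theorem get_congr {α : Type*} {l l' : List α} (h : l = l')
    {i : Fin l.length} {i' : Fin l'.length} (hv : (i : ℕ) = (i' : ℕ)) :
    l.get i = l'.get i' := by
  subst h; cases Fin.ext hv; rfl

theorem app_congr {β : Sort*} {D : β → Sort*} (F : ∀ b, D b) {u v : β} (h : u = v) :
    HEq (F u) (F v) := by cases h; exact HEq.rfl

theorem snd_congr {β : Type*} {D : β → Sort*} (F : ∀ b, D b) {l l' : List β} (h : l = l')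
    (i : Fin l.length) (i' : Fin l'.length) (hv : (i : ℕ) = (i' : ℕ)) :
    HEq (F (l.get i)) (F (l'.get i')) := by
  subst h; cases Fin.ext hv; exact HEq.rfl

theorem getElem_flatMap {α β : Type*} (fn : α → List β) (l : List α) (i : ℕ)
    (hi : i < l.length) (j : ℕ) (hj : j < (fn (l[i]'hi)).length)
    (ht : ((l.take i).map (fun a => (fn a).length)).sum + j < (l.flatMap fn).length) :
    (l.flatMap fn)[((l.take i).map (fun a => (fn a).length)).sum + j]'ht
      = (fn (l[i]'hi))[j]'hj := by
  induction l generalizing i with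
  | nil => simp at hi
  | cons a l ih =>
    cases i with
    | zero =>
      simp only [List.take_zero, List.map_nil, List.sum_nil, Nat.zero_add,
        List.flatMap_cons] at ht ⊢
      exact List.getElem_append_left hj
    | succ i =>
      simp only [List.take_succ_cons, List.map_cons, List.sum_cons, List.flatMap_cons,
        List.getElem_cons_succ] at ht ⊢
      rw [List.getElem_append_right (by omega)]
      have hx : (fn a).length + (List.map (fun a => (fn a).length) (List.take i l)).sum + j
          - (fn a).length = (List.map (fun a => (fn a).length) (List.take i l)).sum + j := by
        omega
      simp only [hx]
      exact ih i (by simpa using hi) hj (by simp only [List.length_append] at ht; omega)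

end Helpers

end Operad

open Operad in
/-- The Hom object `Hom_{A_P}(Fin m, Fin n) = ∐_{f} ⊗_{t} P(f⁻¹(t))` of the enriched category
`A_P` (in `C = Type u`, the coproduct is a sigma type and the tensor product over the fibers is
a dependent product). -/
def HomP (P : Operad.{u}) (m n : ℕ) :=
  Σ f : NCHom m n, (j : Fin n) → P.ob (f.fiber j).length

/-- The identity of `A_P`: the identity of `ΔΣ` with the operadic unit on each fiber. -/
def idP (P : Operad.{u}) (m : ℕ) : HomP P m m :=
  ⟨NCHom.id m, fun _ => P.unit⟩

/-- The enriched composition of `A_P`, induced by the operad structure maps of `P`. -/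
def compP {P : Operad.{u}} {m n p : ℕ} (g : HomP P n p) (f : HomP P m n) : HomP P m p :=
  ⟨g.1.comp f.1, fun k =>
    P.castOb (by simp only [NCHom.comp, List.length_flatMap, Function.comp_def])
      (P.γ ((g.1.fiber k).map fun j => (f.1.fiber j).length)
        (P.castOb (List.length_map _).symm (g.2 k))
        (fun i => P.castOb (by simp)
          (f.2 ((g.1.fiber k).get (Fin.cast (List.length_map _) i)))))⟩


theorem NCHom.fiber_ext {m n : ℕ} {x y : NCHom m n} (h : x.fiber = y.fiber) : x = y := by
  cases x; cases y; cases h; rfl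

theorem HomP.ext {P : Operad.{u}} {m n : ℕ} {x y : HomP P m n}
    (h1 : x.1 = y.1) (h2 : ∀ k, HEq (x.2 k) (y.2 k)) : x = y := by
  obtain ⟨x1, x2⟩ := x; obtain ⟨y1, y2⟩ := y
  cases h1
  exact congrArg _ (funext fun k => eq_of_heq (h2 k))

/-- A subcategory of `ΔΣ`: a collection of objects and morphisms closed under identities and
composition. -/
structure SubNC where
  objs : Set ℕ
  homs : ∀ m n : ℕ, Set (NCHom m n)
  id_mem : ∀ m ∈ objs, NCHom.id m ∈ homs m m
  comp_mem : ∀ {m n p : ℕ} (g : NCHom n p) (f : NCHom m n),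
    g ∈ homs n p → f ∈ homs m n → g.comp f ∈ homs m p

/-- The enriched composition of `A_P` is unital and associative, i.e. `A_P` is a category
enriched in `C = Type u`. -/
theorem enriched_composition_unital_assoc (P : Operad.{u})
    (hlu : P.LeftUnit) (hru : P.RightUnit) (hassoc : P.Assoc) (A : SubNC) :
    (∀ m n : ℕ, m ∈ A.objs → n ∈ A.objs → ∀ f : HomP P m n, f.1 ∈ A.homs m n →
      compP f (idP P m) = f ∧ compP (idP P n) f = f) ∧
    (∀ m n p q : ℕ, ∀ (f : HomP P m n) (g : HomP P n p) (h : HomP P p q),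
      f.1 ∈ A.homs m n → g.1 ∈ A.homs n p → h.1 ∈ A.homs p q →
      compP (compP h g) f = compP h (compP g f)) := by
  constructor
  · intro m n _ _ f _
    constructor
    · -- right unit
      refine HomP.ext (NCHom.fiber_ext ?_) ?_
      · funext k
        simp [compP, idP, NCHom.comp, NCHom.id]
      · intro k
        simp only [compP, idP]
        rw [P.heq_castOb_left]
        refine HEq.trans (HEq.trans (P.γ_congr ?_ ?_ ?_)
          (heq_of_eq (hru (f.1.fiber k).length (f.2 k)))) (P.castOb_heq _ _)
        · simp [NCHom.id, List.map_const']
        · rw [P.heq_castOb_left, P.heq_castOb_right]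
        · intro i i' hv
          exact (P.heq_castOb_left _ _ _).mpr ((P.heq_castOb_right _ _ _).mpr HEq.rfl)
    · -- left unit
      refine HomP.ext (NCHom.fiber_ext ?_) ?_
      · funext k
        simp [compP, idP, NCHom.comp, NCHom.id]
      · intro k
        simp only [compP, idP, NCHom.id]
        rw [P.heq_castOb_left]
        refine HEq.trans (HEq.trans (P.γ_congr ?_ ?_ ?_)
          (heq_of_eq (hlu (f.1.fiber k).length
            (fun _ => P.castOb ((List.getElem_singleton _).symm) (f.2 k)))))
          (((P.castOb_heq _ _).trans (P.castOb_heq _ _)))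
        · simp
        · rw [P.heq_castOb_left]
        · intro i i' hv
          rw [P.heq_castOb_left, P.heq_castOb_right]
          have : ([k].get (Fin.cast (by simp) i) : Fin n) = k := by simp
          rw [this]
  · intro m n p q f g h _ _ _
    refine HomP.ext (NCHom.fiber_ext ?_) ?_
    · funext l
      simp [compP, NCHom.comp, List.flatMap_assoc]
    · intro l
      simp only [compP, NCHom.comp]
      refine (P.heq_castOb_left _ _ _).mpr ((P.heq_castOb_right _ _ _).mpr ?_)
      have key : (List.map (fun k => List.map (fun j => (f.fst.fiber j).length)
            (g.fst.fiber k)) (h.fst.fiber l)).flatten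
          = List.map (fun j => (f.fst.fiber j).length)
            ((h.fst.fiber l).flatMap g.fst.fiber) := by
        rw [← List.flatMap_def, ← List.map_flatMap]
      refine HEq.trans (P.γ_congr key.symm ?hA ?hC)
        (HEq.trans (heq_of_eq (hassoc
          (List.map (fun k => List.map (fun j => (f.fst.fiber j).length)
            (g.fst.fiber k)) (h.fst.fiber l))
          (P.castOb (by simp) (h.snd l))
          (fun i => P.castOb (by simp [Fin.getElem_fin])
            (g.snd ((h.fst.fiber l).get (Fin.cast (by simp) i))))
          (fun t => P.castOb (by simp [key, Fin.getElem_fin])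
            (f.snd (((h.fst.fiber l).flatMap g.fst.fiber).get (Fin.cast (by simp [key]) t))))
          (fun i j => P.castOb (by
              obtain ⟨jv, hj⟩ := j
              obtain ⟨iv, hi⟩ := i
              simp [Fin.getElem_fin])
            (f.snd ((g.fst.fiber ((h.fst.fiber l).get (Fin.cast (by simp) i))).get
              (Fin.cast (by
                obtain ⟨jv, hj⟩ := j
                obtain ⟨iv, hi⟩ := i
                simp [Fin.getElem_fin]) j))))
          ?hyp))
          ((P.castOb_heq _ _).trans (P.γ_congr ?hns2 ?hA2 ?hB2)))
      case hA =>
        (repeat refine (P.castOb_heq _ _).trans ?_); (repeat refine HEq.trans ?_ (P.castOb_heq _ _).symm)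
        refine P.γ_congr ?_ ?_ ?_
        · simp [Function.comp_def]
        · (repeat refine (P.castOb_heq _ _).trans ?_); (repeat refine HEq.trans ?_ (P.castOb_heq _ _).symm)
          exact HEq.rfl
        · intro i i' hv
          (repeat refine (P.castOb_heq _ _).trans ?_); (repeat refine HEq.trans ?_ (P.castOb_heq _ _).symm)
          refine Operad.snd_congr g.snd rfl _ _ ?_
          simp [hv]
      case hC =>
        intro t t' hv
        (repeat refine (P.castOb_heq _ _).trans ?_); (repeat refine HEq.trans ?_ (P.castOb_heq _ _).symm)
        refine Operad.snd_congr f.snd rfl _ _ ?_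
        simp [hv]
      case hyp =>
        intro i j
        (repeat refine (P.castOb_heq _ _).trans ?_); (repeat refine HEq.trans ?_ (P.castOb_heq _ _).symm)
        refine Operad.app_congr f.snd ?_
        simp only [List.get_eq_getElem, Fin.coe_cast, Operad.flatIdx]
        have hb1 : (i : ℕ) < (h.fst.fiber l).length := by simpa using i.isLt
        have hb2 : (j : ℕ) < (g.fst.fiber ((h.fst.fiber l)[(i : ℕ)]'hb1)).length := by
          simpa [Fin.getElem_fin] using j.isLt
        have hidx : ((List.map (fun k => List.map (fun j => (f.fst.fiber j).length)
              (g.fst.fiber k)) (h.fst.fiber l)).take (i : ℕ)).map List.length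
            = ((h.fst.fiber l).take (i : ℕ)).map (fun a => (g.fst.fiber a).length) := by
          rw [← List.map_take, List.map_map]
          simp [Function.comp_def]
        have hsum : ((((h.fst.fiber l).take (i : ℕ)).map
              (fun a => (g.fst.fiber a).length)).sum + (j : ℕ))
            < ((h.fst.fiber l).flatMap g.fst.fiber).length := by
          have := Operad.sum_take_add_lt
            (ns := (h.fst.fiber l).map (fun a => (g.fst.fiber a).length))
            ⟨(i : ℕ), by simpa using hb1⟩ (j := (j : ℕ)) (by simpa using hb2)
          simpa [← List.map_take, List.length_flatMap, Function.comp_def] using this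
        have hg := Operad.getElem_flatMap g.fst.fiber (h.fst.fiber l) (i : ℕ) hb1 (j : ℕ)
          hb2 hsum
        simp only [hidx]
        exact hg
      case hns2 => simp [Function.comp_def, List.length_flatMap]
      case hA2 =>
        simp only [P.heq_castOb_left, P.heq_castOb_right]
        exact HEq.rfl
      case hB2 =>
        intro i i' hv
        (repeat refine (P.castOb_heq _ _).trans ?_); (repeat refine HEq.trans ?_ (P.castOb_heq _ _).symm)
        refine P.γ_congr ?_ ?_ ?_
        · simp [Fin.getElem_fin, hv]
        · (repeat refine (P.castOb_heq _ _).trans ?_); (repeat refine HEq.trans ?_ (P.castOb_heq _ _).symm)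
          refine Operad.snd_congr g.snd rfl _ _ ?_
          simp [hv]
        · intro j j' hw
          (repeat refine (P.castOb_heq _ _).trans ?_); (repeat refine HEq.trans ?_ (P.castOb_heq _ _).symm)
          refine Operad.snd_congr f.snd
            (congrArg g.fst.fiber (Operad.get_congr rfl (by simp [hv]))) _ _ ?_
          simp [hw]
end

section
/- A morphism f : S → T in the category ^0ΔC of based cyclically ordered sets, together with the linear ordering of each fiber, extends canonically to a morphism S ⊔ {1} → T ⊔ {1} of doubly based totally ordered sets, by sending the elements of f^{-1}(0) greater than the basepoint 0 (in the fiber's linear order, relative to the cyclic structure) to 0 and those less than 0 to 1; this construction is functorial and gives an isomorphism of categories ^0ΔC ≅ ^{01}Δ. -/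
/-!
STATEMENT 10: A morphism `f : S → T` in the category `^0ΔC` of based cyclically ordered sets,
together with the linear orderings of the fibers, extends canonically to a morphism
`S ⊔ {1} → T ⊔ {1}` of doubly based totally ordered sets (send the elements of `f⁻¹(0)` greater
than the basepoint `0` to `0` and those less than `0` to `1`); this construction is functorial
and gives an isomorphism of categories `^0ΔC ≅ ^{01}Δ`.

We use skeletal models.  `^{01}Δ` has objects `m : ℕ` (standing for `Fin (m+2)`) and morphisms
the monotone doubly based maps.  `^0ΔC` has objects `m : ℕ` (standing for the based cyclically
ordered set `ℤ/(m+1)` with basepoint `0`); a basepoint-preserving cyclic map with fiber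
orderings is encoded, in the standard way, as a monotone map `F : ℤ → ℤ` with `F 0 = 0` and
`F (x + (m+1)) = F x + (n+1)` (the fiber orderings being recorded by the integral lifts).
-/

open CategoryTheory

/-- Objects of the doubly based simplex category `^{01}Δ`: `m` stands for `Fin (m+2)`. -/
def TwoPtDelta : Type := ℕ

/-- Morphisms of `^{01}Δ`: monotone maps preserving the minimal and the maximal element. -/
def TwoPtDelta.Hom (m n : ℕ) : Type :=
  {f : Fin (m + 2) →o Fin (n + 2) //
    f 0 = 0 ∧ f (Fin.last (m + 1)) = Fin.last (n + 1)}

instance : Category TwoPtDelta where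
  Hom := TwoPtDelta.Hom
  id m := ⟨OrderHom.id, rfl, rfl⟩
  comp {m n p} f g := ⟨g.1.comp f.1,
    by show g.1 (f.1 0) = 0; rw [f.2.1]; exact g.2.1,
    by show g.1 (f.1 _) = _; rw [f.2.2]; exact g.2.2⟩

/-- Objects of the based cyclic category `^0ΔC`: `m` stands for the based cyclically ordered
set `ℤ/(m+1)` with basepoint `0`. -/
def BasedCyclic : Type := ℕ

/-- Morphisms of `^0ΔC`: basepoint-preserving cyclic-order-preserving maps with linearly
ordered fibers, encoded as monotone degree-one maps of `ℤ` fixing `0`. -/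
def BasedCyclic.Hom (m n : ℕ) : Type :=
  {F : ℤ →o ℤ // F 0 = 0 ∧ ∀ x : ℤ, F (x + (m + 1)) = F x + (n + 1)}

noncomputable instance : Category BasedCyclic where
  Hom := BasedCyclic.Hom
  id m := ⟨OrderHom.id, rfl, fun x => rfl⟩
  comp {m n p} F G := ⟨G.1.comp F.1,
    by show G.1 (F.1 0) = 0; rw [F.2.1]; exact G.2.1,
    by intro x; show G.1 (F.1 (x + _)) = G.1 (F.1 x) + _; rw [F.2.2]; exact G.2.2 _⟩

namespace BCAux

/-- The residue of `x` mod `m+1`, as an element of `Fin (m+2)`. -/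
def fm (m : ℕ) (x : ℤ) : Fin (m + 2) :=
  ⟨(x % ((m : ℤ) + 1)).toNat, by
    have h1 := Int.emod_lt_of_pos x (show (0:ℤ) < (m:ℤ)+1 by positivity)
    have h2 := Int.emod_nonneg x (show ((m:ℤ)+1) ≠ 0 by positivity)
    omega⟩

lemma fm_val (m : ℕ) (x : ℤ) : ((fm m x : Fin (m+2)) : ℤ) = x % ((m : ℤ) + 1) := by
  have h2 := Int.emod_nonneg x (show ((m:ℤ)+1) ≠ 0 by positivity)
  simp only [fm]
  omega

lemma iter {m n : ℕ} (F : BasedCyclic.Hom m n) (q r : ℤ) :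
    F.1 (r + q * (m + 1)) = F.1 r + q * (n + 1) := by
  induction q using Int.induction_on with
  | zero => simp
  | succ k ih =>
      rw [show r + ((k : ℤ) + 1) * (m + 1) = (r + k * (m + 1)) + (m + 1) by ring,
        F.2.2, ih]; ring
  | pred k ih =>
      have h := F.2.2 (r + (-(k : ℤ) - 1) * (m + 1))
      rw [show r + (-(k : ℤ) - 1) * (m + 1) + (m + 1) = r + (-(k : ℤ)) * (m + 1) by ring,
        ih] at h
      linear_combination -h

lemma F_nonneg {m n : ℕ} (F : BasedCyclic.Hom m n) {x : ℤ} (hx : 0 ≤ x) : 0 ≤ F.1 x := by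
  have h := F.1.monotone hx
  rwa [F.2.1] at h

lemma F_top {m n : ℕ} (F : BasedCyclic.Hom m n) : F.1 ((m : ℤ) + 1) = (n : ℤ) + 1 := by
  have h := F.2.2 0
  rw [F.2.1] at h
  simpa using h

lemma F_le {m n : ℕ} (F : BasedCyclic.Hom m n) {x : ℤ} (hx : x ≤ (m : ℤ) + 1) :
    F.1 x ≤ (n : ℤ) + 1 := by
  have h := F.1.monotone hx
  rw [F_top] at h
  exact h

/-- Forward map on morphisms. -/
noncomputable def toFin {m n : ℕ} (F : BasedCyclic.Hom m n) : TwoPtDelta.Hom m n :=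
  ⟨⟨fun i => ⟨(F.1 (i.val : ℤ)).toNat, by
      have hb : (i.val : ℤ) ≤ (m : ℤ) + 1 := by
        have := i.2; omega
      have h1 := F_le F hb
      omega⟩,
    fun i j hij => by
      have h : F.1 ((i : Fin (m+2)).val : ℤ) ≤ F.1 ((j : Fin (m+2)).val : ℤ) :=
        F.1.monotone (by exact_mod_cast hij)
      simpa [Fin.le_def] using Int.toNat_le_toNat h⟩,
    by apply Fin.ext; show (F.1 ((0 : Fin (m+2)).val : ℤ)).toNat = 0; simp [F.2.1],
    by
      apply Fin.ext
      show (F.1 (((m : ℕ) + 1 : ℕ) : ℤ)).toNat = n + 1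
      have := F_top F
      push_cast
      omega⟩

/-- Backward map on morphisms. -/
noncomputable def toInt {m n : ℕ} (f : TwoPtDelta.Hom m n) : BasedCyclic.Hom m n := by
  refine ⟨⟨fun x => ((f.1 (fm m x) : Fin (n+2)) : ℤ) + ((n : ℤ) + 1) * (x / ((m : ℤ) + 1)),
    monotone_int_of_le_succ fun x => ?_⟩, ?_, ?_⟩
  · have hmod := Int.emod_nonneg x (show ((m:ℤ)+1) ≠ 0 by positivity)
    have hlt := Int.emod_lt_of_pos x (show (0:ℤ) < (m:ℤ)+1 by positivity)
    have hde := Int.emod_add_mul_ediv x ((m : ℤ) + 1)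
    by_cases hr : x % ((m : ℤ) + 1) = m
    · have hdm : (x + 1) / ((m : ℤ) + 1) = x / ((m : ℤ) + 1) + 1 ∧
          (x + 1) % ((m : ℤ) + 1) = 0 := by
        rw [Int.ediv_emod_unique (show (0:ℤ) < (m:ℤ)+1 by positivity)]
        refine ⟨by linarith, le_refl _, by positivity⟩
      have harg : fm m (x + 1) = 0 := by
        apply Fin.ext
        show ((x + 1) % ((m : ℤ) + 1)).toNat = 0
        rw [hdm.2]; rfl
      have hbound : ((f.1 (fm m x) : Fin (n+2)) : ℕ) ≤ n + 1 :=
        Nat.lt_succ_iff.mp (f.1 (fm m x)).2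
      have hbound' : ((f.1 (fm m x) : Fin (n+2)) : ℤ) ≤ (n : ℤ) + 1 := by exact_mod_cast hbound
      rw [hdm.1, harg, f.2.1]
      show _ ≤ ((0 : Fin (n+2)) : ℤ) + _
      push_cast
      nlinarith
    · have hdm : (x + 1) / ((m : ℤ) + 1) = x / ((m : ℤ) + 1) ∧
          (x + 1) % ((m : ℤ) + 1) = x % ((m : ℤ) + 1) + 1 := by
        rw [Int.ediv_emod_unique (show (0:ℤ) < (m:ℤ)+1 by positivity)]
        refine ⟨by linarith, by omega, by omega⟩
      have hmono : f.1 (fm m x) ≤ f.1 (fm m (x + 1)) := by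
        apply f.1.monotone
        simp only [Fin.le_def, fm]
        rw [hdm.2]; omega
      have hmono' : ((f.1 (fm m x) : Fin (n+2)) : ℤ) ≤ ((f.1 (fm m (x+1)) : Fin (n+2)) : ℤ) := by
        exact_mod_cast hmono
      rw [hdm.1]
      linarith
  · have h0 : fm m 0 = 0 := by
      apply Fin.ext
      show ((0 : ℤ) % ((m : ℤ) + 1)).toNat = 0
      simp
    show ((f.1 (fm m 0) : Fin (n+2)) : ℤ) + ((n : ℤ) + 1) * ((0:ℤ) / ((m : ℤ) + 1)) = 0
    rw [h0, f.2.1]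
    simp
  · intro x
    have h2 : (x + ((m : ℤ) + 1)) / ((m : ℤ) + 1) = x / ((m : ℤ) + 1) + 1 := by
      simpa using Int.add_mul_ediv_right x 1 (show ((m:ℤ)+1) ≠ 0 by positivity)
    have h3 : fm m (x + ((m : ℤ) + 1)) = fm m x := by
      apply Fin.ext
      show ((x + ((m : ℤ) + 1)) % ((m : ℤ) + 1)).toNat = (x % ((m : ℤ) + 1)).toNat
      have h1 : (x + ((m : ℤ) + 1)) % ((m : ℤ) + 1) = x % ((m : ℤ) + 1) := by
        simpa using Int.add_mul_emod_self_left (a := x) (b := (m : ℤ) + 1) (c := 1)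
      rw [h1]
    show ((f.1 (fm m (x + ((m:ℤ)+1))) : Fin (n+2)) : ℤ) + ((n:ℤ)+1) * ((x + ((m:ℤ)+1)) / ((m:ℤ)+1))
      = (((f.1 (fm m x) : Fin (n+2)) : ℤ) + ((n:ℤ)+1) * (x / ((m:ℤ)+1))) + ((n:ℤ)+1)
    rw [h2, h3]
    ring

lemma toInt_toFin {m n : ℕ} (F : BasedCyclic.Hom m n) : toInt (toFin F) = F := by
  apply Subtype.ext
  apply OrderHom.ext
  funext x
  have hmod := Int.emod_nonneg x (show ((m:ℤ)+1) ≠ 0 by positivity)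
  have hde := Int.emod_add_mul_ediv x ((m : ℤ) + 1)
  have hF : ((toFin F).1 (fm m x) : ℤ) = F.1 (x % ((m : ℤ) + 1)) := by
    show (((F.1 (((fm m x).val : ℕ) : ℤ)).toNat : ℕ) : ℤ) = _
    have hv : (((fm m x).val : ℕ) : ℤ) = x % ((m : ℤ) + 1) := fm_val m x
    rw [hv]
    exact Int.toNat_of_nonneg (F_nonneg F hmod)
  show ((toFin F).1 (fm m x) : ℤ) + ((n : ℤ) + 1) * (x / ((m : ℤ) + 1)) = F.1 x
  rw [hF]
  have h := iter F (x / ((m : ℤ) + 1)) (x % ((m : ℤ) + 1))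
  rw [show x % ((m:ℤ)+1) + x / ((m:ℤ)+1) * ((m:ℤ)+1) = x by linarith] at h
  linarith

lemma toFin_toInt {m n : ℕ} (f : TwoPtDelta.Hom m n) : toFin (toInt f) = f := by
  apply Subtype.ext
  apply OrderHom.ext
  funext i
  apply Fin.ext
  show ((toInt f).1 ((i.val : ℕ) : ℤ)).toNat = (f.1 i : ℕ)
  have hi := i.2
  by_cases h : (i.val : ℕ) ≤ m
  · have hmod : ((i.val : ℕ) : ℤ) % ((m : ℤ) + 1) = (i.val : ℕ) :=
      Int.emod_eq_of_lt (by positivity) (by exact_mod_cast Nat.lt_succ_of_le h)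
    have hdiv : ((i.val : ℕ) : ℤ) / ((m : ℤ) + 1) = 0 :=
      Int.ediv_eq_zero_of_lt (by positivity) (by exact_mod_cast Nat.lt_succ_of_le h)
    have harg : fm m ((i.val : ℕ) : ℤ) = i := by
      apply Fin.ext
      show (((i.val : ℕ) : ℤ) % ((m : ℤ) + 1)).toNat = i.val
      rw [hmod]; omega
    show ((f.1 (fm m ((i.val : ℕ) : ℤ)) : ℤ) + ((n : ℤ) + 1) * (((i.val : ℕ) : ℤ) / ((m : ℤ) + 1))).toNat = _
    rw [harg, hdiv]
    simp
  · have hi1 : (i.val : ℕ) = m + 1 := by omega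
    have hmod : ((i.val : ℕ) : ℤ) % ((m : ℤ) + 1) = 0 := by
      rw [hi1]; push_cast; simp
    have hdiv : ((i.val : ℕ) : ℤ) / ((m : ℤ) + 1) = 1 := by
      rw [hi1]; push_cast; rw [Int.ediv_self (by positivity)]
    have harg : fm m ((i.val : ℕ) : ℤ) = 0 := by
      apply Fin.ext
      show (((i.val : ℕ) : ℤ) % ((m : ℤ) + 1)).toNat = 0
      rw [hmod]; rfl
    have hlast : i = Fin.last (m + 1) := by apply Fin.ext; simpa using hi1
    show ((f.1 (fm m ((i.val : ℕ) : ℤ)) : ℤ) + ((n : ℤ) + 1) * (((i.val : ℕ) : ℤ) / ((m : ℤ) + 1))).toNat = _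
    rw [harg, hdiv, f.2.1, hlast, f.2.2]
    show ((0:ℤ) + ((n:ℤ)+1) * 1).toNat = n + 1
    omega

lemma toFin_id (m : ℕ) :
    toFin (@CategoryStruct.id BasedCyclic _ m) = @CategoryStruct.id TwoPtDelta _ m := by
  apply Subtype.ext
  apply OrderHom.ext
  funext i
  apply Fin.ext
  show ((i.val : ℕ) : ℤ).toNat = i.val
  omega

lemma toFin_comp {m n p : ℕ} (F : BasedCyclic.Hom m n) (G : BasedCyclic.Hom n p) :
    toFin (@CategoryStruct.comp BasedCyclic _ m n p F G) =
      @CategoryStruct.comp TwoPtDelta _ m n p (toFin F) (toFin G) := by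
  apply Subtype.ext
  apply OrderHom.ext
  funext i
  apply Fin.ext
  show (G.1 (F.1 ((i.val : ℕ) : ℤ))).toNat = (G.1 (((F.1 ((i.val : ℕ) : ℤ)).toNat : ℕ) : ℤ)).toNat
  rw [Int.toNat_of_nonneg (F_nonneg F (by positivity))]

noncomputable def Ffun : BasedCyclic ⥤ TwoPtDelta where
  obj m := m
  map := toFin
  map_id := toFin_id
  map_comp := toFin_comp

noncomputable def Gfun : TwoPtDelta ⥤ BasedCyclic where
  obj m := m
  map := toInt
  map_id m := by
    show toInt _ = _
    rw [← toFin_id m]; exact toInt_toFin _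
  map_comp {m n p} f g := by
    show toInt _ = _
    conv_lhs => rw [← toFin_toInt f, ← toFin_toInt g]
    exact (congrArg toInt (toFin_comp (toInt f) (toInt g))).symm.trans (toInt_toFin _)

end BCAux

/-- `^0ΔC` is isomorphic to `^{01}Δ` (both categories have objects indexed by `ℕ`, an object
with `m+1` elements corresponding to one with `m+2` elements; on morphisms, the basepoint fiber
is split into its parts after and before the basepoint, which are sent to the new minimal and
maximal elements respectively). -/
theorem basedCyclic_iso_twoPtDelta :
    ∃ (F : BasedCyclic ⥤ TwoPtDelta) (G : TwoPtDelta ⥤ BasedCyclic),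
      F ⋙ G = 𝟭 BasedCyclic ∧ G ⋙ F = 𝟭 TwoPtDelta ∧
      ∀ m : BasedCyclic, F.obj m = m := by
  refine ⟨BCAux.Ffun, BCAux.Gfun, ?_, ?_, fun m => rfl⟩
  · refine CategoryTheory.Functor.ext (fun m => rfl) (fun X Y f => ?_)
    exact BCAux.toInt_toFin f
  · refine CategoryTheory.Functor.ext (fun m => rfl) (fun X Y f => ?_)
    exact BCAux.toFin_toInt f
end
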